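/- Every zero z of the monic right quaternionic polynomial f_r(z) = zⁿ + z^{n−1} q_n + ⋯ + z q₂ + q₁ satisfies |z| ≤ α + √(1 + Σ_{j=1}^{n−1} |q_j|²), where α = √(Σ_{j=1}^{n} |q_j − q_{j−1}|²) with q₀ = 0. -/

import Mathlib

open scoped Quaternion
open Finset Matrix
set_option maxHeartbeats 1000000

private lemma geo_aux (r : ℝ) (hr : 1 ≤ r) (m : ℕ) :
    Real.sqrt (r^2 - 1) * Real.sqrt (∑ i ∈ range m, (r^i)^2) ≤ r^m := by
  have h1 : ∑ i ∈ range m, (r^i)^2 = ∑ i ∈ range m, (r^2)^i := by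
    simp [← pow_mul, mul_comm]
  rw [h1, ← Real.sqrt_mul (by nlinarith)]
  have h2 : (r^2 - 1) * ∑ i ∈ range m, (r^2)^i ≤ (r^m)^2 := by
    have := geom_sum_mul (r^2) m
    have h3 : (r^2)^m = (r^m)^2 := by rw [← pow_mul, ← pow_mul, mul_comm]
    nlinarith [this]
  calc Real.sqrt ((r^2-1) * ∑ i ∈ range m, (r^2)^i) ≤ Real.sqrt ((r^m)^2) :=
        Real.sqrt_le_sqrt h2
    _ = r^m := Real.sqrt_sq (by positivity)

private lemma reindex_aux (f : ℕ → ℝ) (m : ℕ) :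
    ∑ i ∈ Icc 1 m, f i = ∑ i ∈ range m, f (i+1) := by
  rw [← Finset.Ico_add_one_right_eq_Icc, Finset.sum_Ico_eq_sum_range]
  exact Finset.sum_congr rfl fun i _ => by rw [add_comm]

noncomputable def specNorm {n : ℕ} (A : Matrix (Fin n) (Fin n) ℍ[ℝ]) : ℝ :=
  sSup {r : ℝ | ∃ x : Fin n → ℍ[ℝ], x ≠ 0 ∧
    r = Real.sqrt (∑ i, ‖A.mulVec x i‖ ^ 2) / Real.sqrt (∑ i, ‖x i‖ ^ 2)}

theorem bound_thm1 (n : ℕ) (hn : 2 ≤ n) (q : ℕ → ℍ[ℝ]) (hq0 : q 0 = 0) (z : ℍ[ℝ])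
    (hz : z ^ n + ∑ i ∈ Finset.Icc 1 n, z ^ (i - 1) * q i = 0) :
    ‖z‖ ≤ Real.sqrt (∑ j ∈ Finset.Icc 1 n, ‖q j - q (j - 1)‖ ^ 2) +
      Real.sqrt (1 + ∑ j ∈ Finset.Icc 1 (n - 1), ‖q j‖ ^ 2) := by
  have hn1 : 1 ≤ n := le_trans (by norm_num) hn
  -- rewrite the sums in the goal as range sums
  have hαeq : ∑ j ∈ Icc 1 n, ‖q j - q (j-1)‖^2 = ∑ i ∈ range n, ‖q (i+1) - q i‖^2 := by
    rw [reindex_aux]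
    exact Finset.sum_congr rfl fun i _ => by simp
  have hγeq : ∑ j ∈ Icc 1 (n-1), ‖q j‖^2 = ∑ i ∈ range (n-1), ‖q (i+1)‖^2 :=
    reindex_aux _ _
  rw [hαeq, hγeq]
  set r := ‖z‖ with hrdef
  set α := Real.sqrt (∑ i ∈ range n, ‖q (i+1) - q i‖^2) with hαdef
  set γ := Real.sqrt (∑ i ∈ range (n-1), ‖q (i+1)‖^2) with hγdef
  set β := Real.sqrt (1 + ∑ i ∈ range (n-1), ‖q (i+1)‖^2) with hβdef
  by_contra hcon
  push_neg at hcon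
  have hα0 : 0 ≤ α := Real.sqrt_nonneg _
  have hγ0 : 0 ≤ γ := Real.sqrt_nonneg _
  have hsq0 : (0:ℝ) ≤ ∑ i ∈ range (n-1), ‖q (i+1)‖^2 :=
    Finset.sum_nonneg fun i _ => sq_nonneg _
  have hβγ : γ ≤ β := Real.sqrt_le_sqrt (by linarith)
  have hβ1 : 1 ≤ β := by
    rw [hβdef, show (1:ℝ) = Real.sqrt 1 from (Real.sqrt_one).symm]
    exact Real.sqrt_le_sqrt (by simpa using hsq0)
  have hr1 : 1 < r := by linarith
  have hr0 : 0 < r := by linarith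
  set t := Real.sqrt (r^2 - 1) with htdef
  have ht2 : t^2 = r^2 - 1 := Real.sq_sqrt (by nlinarith)
  have ht0 : 0 < t := Real.sqrt_pos.mpr (by nlinarith)
  have hβsq : β^2 = 1 + ∑ i ∈ range (n-1), ‖q (i+1)‖^2 :=
    Real.sq_sqrt (by linarith)
  have hγsq : γ^2 = ∑ i ∈ range (n-1), ‖q (i+1)‖^2 := Real.sq_sqrt hsq0
  have hF5 : α + γ < t := by
    rw [htdef]
    rw [show α + γ = Real.sqrt ((α+γ)^2) from (Real.sqrt_sq (by linarith)).symm]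
    apply Real.sqrt_lt_sqrt (sq_nonneg _)
    have hab : (α + β) * (α + β) < r * r :=
      mul_self_lt_mul_self (by linarith) hcon
    nlinarith [mul_le_mul_of_nonneg_left hβγ hα0]
  -- the key algebraic identity
  have hre : ∀ (f : ℕ → ℍ[ℝ]), ∑ i ∈ Icc 1 n, z ^ (i-1) * f i
      = ∑ i ∈ range n, z ^ i * f (i+1) := by
    intro f
    rw [← Finset.Ico_add_one_right_eq_Icc, Finset.sum_Ico_eq_sum_range]
    refine Finset.sum_congr rfl fun i _ => ?_
    rw [add_comm 1 i]
    simp only [Nat.add_sub_cancel]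
  set y : ℍ[ℝ] := z^(n-1) + ∑ i ∈ range (n-1), z^i * q (i+1) with hy
  have hkey : z * y = ∑ i ∈ range n, z^i * (q i - q (i+1)) := by
    have hz' : z^n = -∑ i ∈ range n, z^i * q (i+1) := by
      rw [← hre]; exact eq_neg_of_add_eq_zero_left hz
    have hzy : z * y = z^n + ∑ i ∈ range (n-1), z^(i+1) * q (i+1) := by
      rw [hy, mul_add, Finset.mul_sum, ← pow_succ']
      congr 1
      · congr 1; omega
      · refine Finset.sum_congr rfl fun i _ => ?_
        rw [← mul_assoc, ← pow_succ']
    have hsh : ∑ i ∈ range n, z^i * q i = ∑ i ∈ range (n-1), z^(i+1) * q (i+1) := by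
      have := Finset.sum_range_succ' (fun i => z^i * q i) (n-1)
      rw [show n - 1 + 1 = n from by omega] at this
      rw [this]; simp [hq0]
    rw [hzy, hz', ← hsh]
    rw [← Finset.sum_neg_distrib, ← Finset.sum_add_distrib]
    refine Finset.sum_congr rfl fun i _ => ?_
    rw [mul_sub]; abel
  set S := Real.sqrt (∑ i ∈ range n, (r^i)^2) with hSdef
  set S' := Real.sqrt (∑ i ∈ range (n-1), (r^i)^2) with hS'def
  set Y := ‖y‖ with hYdef
  have hY0 : 0 ≤ Y := norm_nonneg _
  have hS0 : 0 ≤ S := Real.sqrt_nonneg _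
  have hS'0 : 0 ≤ S' := Real.sqrt_nonneg _
  -- F1 : r * Y ≤ S * α
  have hF1 : r * Y ≤ S * α := by
    have h1 : ‖z * y‖ ≤ ∑ i ∈ range n, r^i * ‖q (i+1) - q i‖ := by
      rw [hkey]
      refine le_trans (norm_sum_le _ _) (le_of_eq (Finset.sum_congr rfl fun i _ => ?_))
      rw [norm_mul, norm_pow, norm_sub_rev]
    have h2 : ∑ i ∈ range n, r^i * ‖q (i+1) - q i‖ ≤ S * α :=
      Real.sum_mul_le_sqrt_mul_sqrt _ _ _
    calc r * Y = ‖z * y‖ := (norm_mul z y).symm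
      _ ≤ _ := le_trans h1 h2
  -- F2 : r^(n-1) ≤ Y + S' * γ
  have hF2 : r^(n-1) ≤ Y + S' * γ := by
    have hs : ‖∑ i ∈ range (n-1), z^i * q (i+1)‖ ≤ S' * γ := by
      have h1 : ‖∑ i ∈ range (n-1), z^i * q (i+1)‖
          ≤ ∑ i ∈ range (n-1), r^i * ‖q (i+1)‖ := by
        refine le_trans (norm_sum_le _ _) (le_of_eq (Finset.sum_congr rfl fun i _ => ?_))
        rw [norm_mul, norm_pow]
      exact le_trans h1 (Real.sum_mul_le_sqrt_mul_sqrt _ _ _)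
    have hzn : z^(n-1) = y - ∑ i ∈ range (n-1), z^i * q (i+1) := by
      rw [hy]; abel
    calc r^(n-1) = ‖z^(n-1)‖ := (norm_pow z (n-1)).symm
      _ = ‖y - ∑ i ∈ range (n-1), z^i * q (i+1)‖ := by rw [hzn]
      _ ≤ Y + ‖∑ i ∈ range (n-1), z^i * q (i+1)‖ := norm_sub_le _ _
      _ ≤ Y + S' * γ := by linarith
  have hF3 : t * S ≤ r^n := geo_aux r hr1.le n
  have hF4 : t * S' ≤ r^(n-1) := geo_aux r hr1.le (n-1)
  have hF6 : r * r^(n-1) = r^n := by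
    rw [← pow_succ']; congr 1; omega
  have hrn : 0 < r^n := pow_pos hr0 n
  have hrn1 : 0 < r^(n-1) := pow_pos hr0 (n-1)
  -- combine
  have c1 : t * (r * Y) ≤ r^n * α := by
    calc t * (r * Y) ≤ t * (S * α) := mul_le_mul_of_nonneg_left hF1 ht0.le
      _ = (t * S) * α := by ring
      _ ≤ r^n * α := mul_le_mul_of_nonneg_right hF3 hα0
  have c2 : t * r^n ≤ t * (r * Y) + γ * r^n := by
    have e1 : (t*r) * r^(n-1) ≤ (t*r) * (Y + S'*γ) :=
      mul_le_mul_of_nonneg_left hF2 (mul_nonneg ht0.le hr0.le)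
    have e2 : (t*S') * (r*γ) ≤ r^(n-1) * (r*γ) :=
      mul_le_mul_of_nonneg_right hF4 (mul_nonneg hr0.le hγ0)
    nlinarith [e1, e2, hF6]
  nlinarith [c1, c2, hF5, hrn]
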